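/- For every integer n ≥ 1, the following identity holds in the field ℚ(X) of rational functions over ℚ: Σ_{p ∈ Par(n)} (−1)^{ℓ(p)} (1/ℓ(p)) [n; p]_X = (−1)^n (1/n) [n−1]_X, where the sum is over all ordered partitions p of n. -/

import Mathlib

/-- `qBracketR z m = [m]_z = (z^m - 1)(z^{m-1} - 1) ⋯ (z - 1)` in `ℚ(X)`,
with `[0]_z = 1`. -/
noncomputable def qBracketR (z : RatFunc ℚ) (m : ℕ) : RatFunc ℚ :=
  ∏ k ∈ Finset.range m, (z ^ (k + 1) - 1)

open Finset

namespace Stmt3Aux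

noncomputable section

abbrev K : Type := RatFunc ℚ

instance : CharZero K :=
  charZero_of_injective_algebraMap (algebraMap ℚ K).injective

def z : K := RatFunc.X

def Q (m : ℕ) : K := qBracketR z m

lemma z_pow_sub_one_ne (j : ℕ) : (z ^ (j + 1) - 1 : K) ≠ 0 := by
  have h1 : (Polynomial.X ^ (j + 1) - Polynomial.C 1 : Polynomial ℚ) ≠ 0 :=
    Polynomial.X_pow_sub_C_ne_zero (Nat.succ_pos j) 1
  have h2 : (z ^ (j + 1) - 1 : K)
      = algebraMap (Polynomial ℚ) K (Polynomial.X ^ (j + 1) - Polynomial.C 1) := by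
    simp [z, ← RatFunc.algebraMap_X]
  rw [h2]
  exact RatFunc.algebraMap_ne_zero h1

lemma Q_ne (m : ℕ) : Q m ≠ 0 := by
  unfold Q qBracketR
  exact Finset.prod_ne_zero_iff.2 fun k _ => z_pow_sub_one_ne k

@[simp] lemma Q_zero : Q 0 = 1 := by simp [Q, qBracketR]

lemma Q_succ (m : ℕ) : Q (m + 1) = Q m * (z ^ (m + 1) - 1) := by
  simp [Q, qBracketR, Finset.prod_range_succ]

/-- exponent `m(m-1)/2` -/
def e (m : ℕ) : ℕ := ∑ i ∈ Finset.range m, i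

lemma e_succ (m : ℕ) : e (m + 1) = e m + m := Finset.sum_range_succ _ _


def qbin (n m : ℕ) : K := if m ≤ n then Q n / (Q m * Q (n - m)) else 0

@[simp] lemma qbin_zero (n : ℕ) : qbin n 0 = 1 := by
  simp [qbin]
  exact Q_ne n

@[simp] lemma qbin_self (n : ℕ) : qbin n n = 1 := by
  simp [qbin, div_self (Q_ne n)]

lemma qbin_of_gt {n m : ℕ} (h : n < m) : qbin n m = 0 := by
  simp [qbin, Nat.not_le.2 h]

lemma qbin_eq {n m : ℕ} (h : m ≤ n) : qbin n m = Q n / (Q m * Q (n - m)) := by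
  simp [qbin, h]

lemma pascal (k m : ℕ) :
    qbin (k + 1) (m + 1) = z ^ (m + 1) * qbin k (m + 1) + qbin k m := by
  rcases lt_trichotomy m k with h | rfl | h
  · obtain ⟨r, rfl⟩ := Nat.exists_eq_add_of_lt h
    have h1 : qbin (m + r + 1 + 1) (m + 1) = Q (m + r + 2) / (Q (m + 1) * Q (r + 1)) := by
      rw [qbin_eq (by omega), show m + r + 1 + 1 - (m + 1) = r + 1 by omega,
        show m + r + 1 + 1 = m + r + 2 by omega]
    have h2 : qbin (m + r + 1) (m + 1) = Q (m + r + 1) / (Q (m + 1) * Q r) := by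
      rw [qbin_eq (by omega), show m + r + 1 - (m + 1) = r by omega]
    have h3 : qbin (m + r + 1) m = Q (m + r + 1) / (Q m * Q (r + 1)) := by
      rw [qbin_eq (by omega), show m + r + 1 - m = r + 1 by omega]
    rw [h1, h2, h3, show m + r + 2 = (m + r + 1) + 1 from rfl, Q_succ (m + r + 1),
      Q_succ m, Q_succ r]
    have hm := Q_ne m
    have hr := Q_ne r
    have hmr := Q_ne (m + r + 1)
    have h4 := z_pow_sub_one_ne m
    have h5 := z_pow_sub_one_ne r
    field_simp
    ring
  · rw [qbin_self, qbin_of_gt (Nat.lt_succ_self m), qbin_self]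
    ring
  · rw [qbin_of_gt (by omega), qbin_of_gt (by omega), qbin_of_gt (by omega)]
    ring

lemma gauss (k : ℕ) (t : K) :
    (∑ m ∈ range (k + 1), (-1 : K) ^ m * z ^ e m * qbin k m * t ^ m)
      = ∏ j ∈ range k, (1 - z ^ j * t) := by
  induction k generalizing t with
  | zero => simp [e]
  | succ k ih =>
    have key : ∀ m ∈ range (k + 1),
        (-1 : K) ^ (m + 1) * z ^ e (m + 1) * qbin (k + 1) (m + 1) * t ^ (m + 1)
          = ((-1 : K) ^ (m + 1) * z ^ e (m + 1) * qbin k (m + 1) * (z * t) ^ (m + 1))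
            + (-t) * ((-1 : K) ^ m * z ^ e m * qbin k m * (z * t) ^ m) := by
      intro m _
      rw [pascal, e_succ]
      ring
    have hA : (∑ m ∈ range (k + 1),
          (-1 : K) ^ (m + 1) * z ^ e (m + 1) * qbin k (m + 1) * (z * t) ^ (m + 1))
        = (∑ m ∈ range (k + 1), (-1 : K) ^ m * z ^ e m * qbin k m * (z * t) ^ m) - 1 := by
      have h1 := Finset.sum_range_succ'
        (fun m => (-1 : K) ^ m * z ^ e m * qbin k m * (z * t) ^ m) (k + 1)
      have h2 := Finset.sum_range_succ
        (fun m => (-1 : K) ^ m * z ^ e m * qbin k m * (z * t) ^ m) (k + 1)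
      rw [qbin_of_gt (Nat.lt_succ_self k)] at h2
      simp only [mul_zero, zero_mul, add_zero] at h2
      have h0 : ((-1 : K) ^ 0 * z ^ e 0 * qbin k 0 * (z * t) ^ 0) = 1 := by simp [e]
      rw [h0] at h1
      linear_combination h2 - h1
    rw [Finset.sum_range_succ']
    rw [Finset.sum_congr rfl key, Finset.sum_add_distrib, ← Finset.mul_sum, hA, ih (z * t)]
    have h0 : ((-1 : K) ^ 0 * z ^ e 0 * qbin (k + 1) 0 * t ^ 0) = 1 := by simp [e]
    rw [h0, Finset.prod_range_succ']
    have hprod : ∀ j ∈ range k, (1 - z ^ j * (z * t)) = (1 - z ^ (j + 1) * t) := by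
      intro j _
      ring
    rw [Finset.prod_congr rfl hprod]
    ring


lemma gauss_z (k : ℕ) :
    (∑ m ∈ range (k + 1), (-1 : K) ^ m * z ^ e m * qbin k m * z ^ m)
      = (-1 : K) ^ k * Q k := by
  rw [gauss k z]
  have h : ∀ j ∈ range k, (1 - z ^ j * z) = (-1 : K) * (z ^ (j + 1) - 1) := by
    intro j _
    ring
  rw [Finset.prod_congr rfl h, Finset.prod_mul_distrib, Finset.prod_const, Finset.card_range]
  rfl

lemma gauss_lt (n : ℕ) (hn : 1 ≤ n) :
    (∑ m ∈ range n, (-1 : K) ^ m * z ^ e m * qbin n m)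
      = -((-1 : K) ^ n * z ^ e n) := by
  have h1 := gauss n 1
  simp only [one_pow, mul_one] at h1
  rw [Finset.sum_range_succ, qbin_self, mul_one] at h1
  have h2 : (∏ x ∈ range n, (1 - z ^ x)) = 0 := by
    apply Finset.prod_eq_zero (Finset.mem_range.2 hn)
    simp
  rw [h2] at h1
  linear_combination h1

lemma Dlem (n : ℕ) (hn : 1 ≤ n) :
    (∑ m ∈ range (n + 1), (m : K) * ((-1 : K) ^ m * z ^ e m * qbin n m))
      = (-1 : K) ^ n * Q (n - 1) := by
  obtain ⟨k, rfl⟩ : ∃ k, n = k + 1 := ⟨n - 1, by omega⟩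
  rw [Finset.sum_range_succ']
  simp only [Nat.cast_zero, zero_mul, add_zero]
  -- H j := (-1)^j * z^(e j) * qbin k j * z^j
  have key : ∀ m ∈ range (k + 1),
      ((m + 1 : ℕ) : K) * ((-1 : K) ^ (m + 1) * z ^ e (m + 1) * qbin (k + 1) (m + 1))
        = (((m + 1 : ℕ) : K) * ((-1 : K) ^ (m + 1) * z ^ e (m + 1) * qbin k (m + 1) * z ^ (m + 1)))
          - (((m + 1 : ℕ) : K) * ((-1 : K) ^ m * z ^ e m * qbin k m * z ^ m)) := by
    intro m _
    rw [pascal, e_succ]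
    push_cast
    ring
  rw [Finset.sum_congr rfl key, Finset.sum_sub_distrib]
  have hA : (∑ m ∈ range (k + 1),
        ((m + 1 : ℕ) : K) * ((-1 : K) ^ (m + 1) * z ^ e (m + 1) * qbin k (m + 1) * z ^ (m + 1)))
      = ∑ m ∈ range (k + 1), (m : K) * ((-1 : K) ^ m * z ^ e m * qbin k m * z ^ m) := by
    have h1 := Finset.sum_range_succ'
      (fun m => (m : K) * ((-1 : K) ^ m * z ^ e m * qbin k m * z ^ m)) (k + 1)
    have h2 := Finset.sum_range_succ
      (fun m => (m : K) * ((-1 : K) ^ m * z ^ e m * qbin k m * z ^ m)) (k + 1)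
    rw [qbin_of_gt (Nat.lt_succ_self k)] at h2
    simp only [Nat.cast_zero, zero_mul, add_zero, mul_zero, zero_mul] at h1 h2
    rw [h2] at h1
    linear_combination -h1
  rw [hA]
  have hB : (∑ m ∈ range (k + 1),
        ((m + 1 : ℕ) : K) * ((-1 : K) ^ m * z ^ e m * qbin k m * z ^ m))
      = (∑ m ∈ range (k + 1), (m : K) * ((-1 : K) ^ m * z ^ e m * qbin k m * z ^ m))
        + ∑ m ∈ range (k + 1), (-1 : K) ^ m * z ^ e m * qbin k m * z ^ m := by
    rw [← Finset.sum_add_distrib]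
    apply Finset.sum_congr rfl
    intro m _
    push_cast
    ring
  rw [hB, gauss_z]
  simp only [Nat.add_sub_cancel]
  ring

lemma keyc (k : ℕ) (hk : 1 ≤ k) :
    -(∑ m ∈ range k, (-1 : K) ^ m * z ^ e m * ((Q m)⁻¹ * (Q (k - m))⁻¹))
      = (-1 : K) ^ k * z ^ e k * (Q k)⁻¹ := by
  have key : ∀ m ∈ range k,
      (-1 : K) ^ m * z ^ e m * ((Q m)⁻¹ * (Q (k - m))⁻¹)
        = (Q k)⁻¹ * ((-1 : K) ^ m * z ^ e m * qbin k m) := by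
    intro m hm
    rw [qbin_eq (le_of_lt (Finset.mem_range.1 hm))]
    have h1 := Q_ne m
    have h2 := Q_ne (k - m)
    have h3 := Q_ne k
    field_simp
  rw [Finset.sum_congr rfl key, ← Finset.mul_sum, gauss_lt k hk]
  ring

lemma keyid (n : ℕ) (hn : 1 ≤ n) :
    -(∑ m ∈ range n, ((n - m : ℕ) : K) * ((-1 : K) ^ m * z ^ e m * qbin n m))
      = (-1 : K) ^ n * Q (n - 1) := by
  have key : ∀ m ∈ range n,
      ((n - m : ℕ) : K) * ((-1 : K) ^ m * z ^ e m * qbin n m)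
        = (n : K) * ((-1 : K) ^ m * z ^ e m * qbin n m)
          - (m : K) * ((-1 : K) ^ m * z ^ e m * qbin n m) := by
    intro m hm
    rw [Nat.cast_sub (le_of_lt (Finset.mem_range.1 hm))]
    ring
  rw [Finset.sum_congr rfl key, Finset.sum_sub_distrib, ← Finset.mul_sum, gauss_lt n hn]
  have hD := Dlem n hn
  rw [Finset.sum_range_succ, qbin_self, mul_one] at hD
  linear_combination hD


/-! ### Combinatorial part -/

def W (l : List ℕ) : K := (-1 : K) ^ l.length / (l.map fun p => qBracketR z p).prod

lemma W_nil : W [] = 1 := by simp [W]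

lemma W_cons (a : ℕ) (l : List ℕ) : W (a :: l) = (-(Q a)⁻¹) * W l := by
  simp only [W, List.map_cons, List.prod_cons, List.length_cons, Q]
  rw [pow_succ]
  field_simp

lemma blocks_ne_nil {n : ℕ} (hn : 1 ≤ n) (c : Composition n) : c.blocks ≠ [] := by
  intro h
  have := c.blocks_sum
  rw [h] at this
  simp at this
  omega

lemma headI_le {n : ℕ} (c : Composition n) : c.blocks.headI ≤ n := by
  cases hb : c.blocks with
  | nil => simp
  | cons a l =>
    have hs := c.blocks_sum
    rw [hb, List.sum_cons] at hs
    simp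
    omega

lemma headI_pos {n : ℕ} (hn : 1 ≤ n) (c : Composition n) : 0 < c.blocks.headI := by
  cases hb : c.blocks with
  | nil => exact absurd hb (blocks_ne_nil hn c)
  | cons a l =>
    simp only [List.headI_cons]
    exact c.blocks_pos (hb ▸ (List.mem_cons_self : a ∈ a :: l))

/-- tail of a composition -/
def tlComp (n : ℕ) (c : Composition n) : Composition (n - c.blocks.headI) where
  blocks := c.blocks.tail
  blocks_pos := fun {i} h => c.blocks_pos (List.mem_of_mem_tail h)
  blocks_sum := by
    cases hb : c.blocks with
    | nil =>
      have := c.blocks_sum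
      rw [hb] at this
      simp at this
      simp [hb, ← this]
    | cons a l =>
      have := c.blocks_sum
      rw [hb, List.sum_cons] at this
      simp [hb]
      omega

/-- cons of a composition -/
def consComp (n m : ℕ) (h : m < n) (c : Composition m) : Composition n where
  blocks := (n - m) :: c.blocks
  blocks_pos := fun {i} hi => by
    rcases List.mem_cons.1 hi with h1 | h2
    · omega
    · exact c.blocks_pos h2
  blocks_sum := by
    rw [List.sum_cons, c.blocks_sum]
    omega

lemma comp_sigma_ext {a b : ℕ} (c1 : Composition a) (c2 : Composition b)
    (h : c1.blocks = c2.blocks) :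
    (⟨a, c1⟩ : (m : ℕ) × Composition m) = ⟨b, c2⟩ := by
  have hab : a = b := by rw [← c1.blocks_sum, ← c2.blocks_sum, h]
  subst hab
  congr 1
  exact Composition.ext h

lemma comp_split (n : ℕ) (hn : 1 ≤ n) (g : List ℕ → K) :
    (∑ c : Composition n, g c.blocks)
      = ∑ m ∈ range n, ∑ c : Composition m, g ((n - m) :: c.blocks) := by
  rw [Finset.sum_sigma']
  refine Finset.sum_bij'
    (fun (c : Composition n) (_ : c ∈ Finset.univ) =>
      (⟨n - c.blocks.headI, tlComp n c⟩ : (m : ℕ) × Composition m))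
    (fun x hx => consComp n x.1 (Finset.mem_range.1 (Finset.mem_sigma.1 hx).1) x.2)
    ?_ ?_ ?_ ?_ ?_
  · intro c _
    rw [Finset.mem_sigma]
    constructor
    · show n - c.blocks.headI ∈ range n
      rw [Finset.mem_range]
      have h1 := headI_pos hn c
      have h2 := headI_le c
      omega
    · exact Finset.mem_univ _
  · intro x hx
    exact Finset.mem_univ _
  · intro c _
    dsimp only
    apply Composition.ext
    show (n - (n - c.blocks.headI)) :: c.blocks.tail = c.blocks
    have h1 := headI_le c
    rw [show n - (n - c.blocks.headI) = c.blocks.headI by omega]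
    cases hb : c.blocks with
    | nil => exact absurd hb (blocks_ne_nil hn c)
    | cons a l => simp
  · intro x hx
    have hm := Finset.mem_range.1 (Finset.mem_sigma.1 hx).1
    apply comp_sigma_ext
    show ((consComp n x.1 hm x.2).blocks).tail = x.2.blocks
    rfl
  · intro c _
    dsimp only
    have h1 := headI_le c
    have h2 : (n - (n - c.blocks.headI)) = c.blocks.headI := by omega
    show g c.blocks = g ((n - (n - c.blocks.headI)) :: (c.blocks.tail))
    rw [h2]
    cases hb : c.blocks with
    | nil => exact absurd hb (blocks_ne_nil hn c)
    | cons a l => simp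

lemma comp_zero_sum (g : List ℕ → K) : (∑ c : Composition 0, g c.blocks) = g [] := by
  have hblocks : ∀ c : Composition 0, c.blocks = [] := by
    intro c
    cases hb : c.blocks with
    | nil => rfl
    | cons a l =>
      have hpos : 0 < a := c.blocks_pos (hb ▸ (List.mem_cons_self : a ∈ a :: l))
      have := c.blocks_sum
      rw [hb, List.sum_cons] at this
      omega
  rw [Finset.sum_congr rfl fun c _ => by rw [hblocks c]]
  rw [Finset.sum_const, Finset.card_univ, composition_card]
  norm_num

def cfun (k : ℕ) : K := ∑ c : Composition k, W c.blocks

lemma cfun_closed : ∀ k : ℕ, cfun k = (-1 : K) ^ k * z ^ e k * (Q k)⁻¹ := by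
  intro k
  induction k using Nat.strong_induction_on with
  | _ k ih =>
    rcases Nat.eq_zero_or_pos k with rfl | hk
    · rw [show cfun 0 = W [] from comp_zero_sum W, W_nil]
      simp [e]
    · unfold cfun
      rw [comp_split k hk W]
      have step : ∀ m ∈ range k,
          (∑ c : Composition m, W ((k - m) :: c.blocks))
            = -((-1 : K) ^ m * z ^ e m * ((Q m)⁻¹ * (Q (k - m))⁻¹)) := by
        intro m hm
        rw [Finset.sum_congr rfl fun c _ => W_cons (k - m) c.blocks, ← Finset.mul_sum]
        have hc : (∑ c : Composition m, W c.blocks) = cfun m := rfl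
        rw [hc, ih m (Finset.mem_range.1 hm)]
        ring
      rw [Finset.sum_congr rfl step, Finset.sum_neg_distrib, keyc k hk]


/-! ### Rotation -/

def rotC (n i : ℕ) (c : Composition n) : Composition n where
  blocks := c.blocks.rotate i
  blocks_pos := fun {j} h => c.blocks_pos (List.mem_rotate.1 h)
  blocks_sum := by rw [(List.rotate_perm c.blocks i).sum_eq, c.blocks_sum]

@[simp] lemma rotC_blocks (n i : ℕ) (c : Composition n) :
    (rotC n i c).blocks = c.blocks.rotate i := rfl

lemma rotC_length (n i : ℕ) (c : Composition n) : (rotC n i c).length = c.length :=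
  List.length_rotate _ _

lemma rotC_comp (n i j : ℕ) (c : Composition n) :
    rotC n j (rotC n i c) = rotC n (i + j) c :=
  Composition.ext (List.rotate_rotate _ _ _)

lemma rot_id (n : ℕ) (c : Composition n) (j : ℕ) : rotC n (c.length * j) c = c := by
  apply Composition.ext
  rw [rotC_blocks, show c.length = c.blocks.length from (Composition.blocks_length c).symm]
  exact List.rotate_length_mul _ _

lemma rotC_inv_a (n : ℕ) (hn : 1 ≤ n) (c : Composition n) (i : ℕ) :
    rotC n (i * ((rotC n i c).length - 1)) (rotC n i c) = c := by
  rw [rotC_length, rotC_comp]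
  obtain ⟨s, hs⟩ : ∃ s, c.length = s + 1 :=
    ⟨c.length - 1, by have := c.length_pos_of_pos hn; omega⟩
  rw [hs, show i + i * (s + 1 - 1) = (s + 1) * i by rw [Nat.add_sub_cancel]; ring, ← hs]
  exact rot_id n c i

lemma rotC_inv_b (n : ℕ) (hn : 1 ≤ n) (c : Composition n) (i : ℕ) :
    rotC n i (rotC n (i * (c.length - 1)) c) = c := by
  rw [rotC_comp]
  obtain ⟨s, hs⟩ : ∃ s, c.length = s + 1 :=
    ⟨c.length - 1, by have := c.length_pos_of_pos hn; omega⟩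
  rw [hs, show i * (s + 1 - 1) + i = (s + 1) * i by rw [Nat.add_sub_cancel]; ring, ← hs]
  exact rot_id n c i

lemma W_rot (l : List ℕ) (i : ℕ) : W (l.rotate i) = W l := by
  unfold W
  rw [List.length_rotate, List.map_rotate, (List.rotate_perm _ _).prod_eq]

lemma headI_eq_get {α : Type*} [Inhabited α] (l : List α) (h : 0 < l.length) :
    l.headI = l.get ⟨0, h⟩ := by
  cases l with
  | nil => simp at h
  | cons a t => rfl

lemma headI_rotate {l : List ℕ} {i : ℕ} (h : i < l.length) :
    (l.rotate i).headI = l.get ⟨i, h⟩ := by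
  have h0 : 0 < (l.rotate i).length := by rw [List.length_rotate]; omega
  rw [headI_eq_get _ h0, List.get_rotate]
  exact congrArg l.get (Fin.ext (by simp [Nat.mod_eq_of_lt h]))

lemma sigma_fin_ext {n : ℕ} {c1 c2 : Composition n} {i1 : Fin c1.length}
    {i2 : Fin c2.length} (h : c1 = c2) (h2 : (i1 : ℕ) = (i2 : ℕ)) :
    (⟨c1, i1⟩ : (c : Composition n) × Fin c.length) = ⟨c2, i2⟩ := by
  subst h
  exact congrArg _ (Fin.ext h2)

lemma sum_head (n : ℕ) (hn : 1 ≤ n) :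
    (∑ c : Composition n, ((c.length : K))⁻¹ * (n : K) * W c.blocks)
      = ∑ c : Composition n, ((c.blocks.headI : ℕ) : K) * W c.blocks := by
  have step1 : ∀ c : Composition n,
      ((c.length : K))⁻¹ * (n : K) * W c.blocks
        = ∑ i : Fin c.length, ((c.length : K))⁻¹ * ((c.blocksFun i : ℕ) : K) * W c.blocks := by
    intro c
    have : ((n : ℕ) : K) = ∑ i : Fin c.length, ((c.blocksFun i : ℕ) : K) := by
      rw [← Nat.cast_sum, c.sum_blocksFun]
    rw [show ((c.length : K))⁻¹ * (n : K) * W c.blocks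
        = ((c.length : K))⁻¹ * ((n : ℕ) : K) * W c.blocks from rfl, this, Finset.mul_sum,
      Finset.sum_mul]
  have step2 : ∀ c : Composition n,
      ((c.blocks.headI : ℕ) : K) * W c.blocks
        = ∑ i : Fin c.length, ((c.length : K))⁻¹ * ((c.blocks.headI : ℕ) : K) * W c.blocks := by
    intro c
    rw [Finset.sum_const, Finset.card_univ, Fintype.card_fin]
    have hl : (c.length : K) ≠ 0 := by
      have := c.length_pos_of_pos hn
      exact Nat.cast_ne_zero.2 (by omega)
    rw [nsmul_eq_mul]
    field_simp
  rw [Finset.sum_congr rfl fun c _ => step1 c, Finset.sum_congr rfl fun c _ => step2 c]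
  rw [← Finset.sum_sigma (Finset.univ : Finset (Composition n))
    (fun c => (Finset.univ : Finset (Fin c.length)))
    (fun x => ((x.1.length : K))⁻¹ * ((x.1.blocksFun x.2 : ℕ) : K) * W x.1.blocks)]
  rw [← Finset.sum_sigma (Finset.univ : Finset (Composition n))
    (fun c => (Finset.univ : Finset (Fin c.length)))
    (fun x => ((x.1.length : K))⁻¹ * ((x.1.blocks.headI : ℕ) : K) * W x.1.blocks)]
  refine Finset.sum_bij'
    (fun (x : (c : Composition n) × Fin c.length) (_ : x ∈ _) =>
      (⟨rotC n (x.2 : ℕ) x.1, Fin.cast (rotC_length n (x.2 : ℕ) x.1).symm x.2⟩ :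
        (c : Composition n) × Fin c.length))
    (fun (y : (c : Composition n) × Fin c.length) (_ : y ∈ _) =>
      (⟨rotC n ((y.2 : ℕ) * (y.1.length - 1)) y.1,
        Fin.cast (rotC_length n ((y.2 : ℕ) * (y.1.length - 1)) y.1).symm y.2⟩ :
        (c : Composition n) × Fin c.length))
    ?_ ?_ ?_ ?_ ?_
  · intro x _
    simp [Finset.mem_sigma]
  · intro y _
    simp [Finset.mem_sigma]
  · intro x _
    apply sigma_fin_ext
    · simp only [Fin.coe_cast]
      exact rotC_inv_a n hn x.1 (x.2 : ℕ)
    · simp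
  · intro y _
    apply sigma_fin_ext
    · simp only [Fin.coe_cast]
      exact rotC_inv_b n hn y.1 (y.2 : ℕ)
    · simp
  · intro x _
    dsimp only
    rw [rotC_blocks, rotC_length, W_rot]
    have hlt : (x.2 : ℕ) < x.1.blocks.length := by
      rw [Composition.blocks_length]
      exact x.2.isLt
    rw [headI_rotate hlt]
    rfl

lemma main_aux (n : ℕ) (hn : 1 ≤ n) :
    (∑ c : Composition n, ((c.blocks.headI : ℕ) : K) * W c.blocks)
      = (Q n)⁻¹ * ((-1 : K) ^ n * Q (n - 1)) := by
  rw [comp_split n hn (fun l => ((l.headI : ℕ) : K) * W l)]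
  have step : ∀ m ∈ range n,
      (∑ c : Composition m, (((((n - m) : ℕ) :: c.blocks).headI : ℕ) : K)
          * W ((n - m) :: c.blocks))
        = -(Q n)⁻¹ * (((n - m : ℕ) : K) * ((-1 : K) ^ m * z ^ e m * qbin n m)) := by
    intro m hm
    have hmn : m < n := Finset.mem_range.1 hm
    have key : ∀ c : Composition m,
        (((((n - m) : ℕ) :: c.blocks).headI : ℕ) : K) * W ((n - m) :: c.blocks)
          = ((n - m : ℕ) : K) * ((-(Q (n - m))⁻¹) * W c.blocks) := by
      intro c
      rw [List.headI_cons, W_cons]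
    rw [Finset.sum_congr rfl fun c _ => key c, ← Finset.mul_sum, ← Finset.mul_sum]
    have hc : (∑ c : Composition m, W c.blocks) = cfun m := rfl
    rw [hc, cfun_closed m, qbin_eq (le_of_lt hmn)]
    have h1 := Q_ne m
    have h2 := Q_ne (n - m)
    have h3 := Q_ne n
    field_simp
  rw [Finset.sum_congr rfl step, ← Finset.mul_sum]
  have := keyid n hn
  rw [show (∑ m ∈ range n, (((n - m : ℕ) : K) * ((-1 : K) ^ m * z ^ e m * qbin n m)))
      = -((-1 : K) ^ n * Q (n - 1)) by linear_combination -this]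
  ring

theorem main (n : ℕ) (hn : 1 ≤ n) :
    ∑ c : Composition n, ((-1 : K) ^ c.length * (1 / (c.length : K)) *
        (qBracketR RatFunc.X n / (c.blocks.map (fun p => qBracketR RatFunc.X p)).prod)) =
      (-1 : K) ^ n * (1 / (n : K)) * qBracketR RatFunc.X (n - 1) := by
  have hX : (RatFunc.X : K) = z := rfl
  have hA : ∀ c : Composition n,
      (-1 : K) ^ c.length * (1 / (c.length : K)) *
          (qBracketR RatFunc.X n / (c.blocks.map (fun p => qBracketR RatFunc.X p)).prod)
        = Q n * (((c.length : K))⁻¹ * W c.blocks) := by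
    intro c
    rw [hX]
    show (-1 : K) ^ c.length * (1 / (c.length : K)) *
        (Q n / (c.blocks.map (fun p => qBracketR z p)).prod)
      = Q n * (((c.length : K))⁻¹ * W c.blocks)
    unfold W
    rw [one_div]
    ring
  rw [Finset.sum_congr rfl fun c _ => hA c, ← Finset.mul_sum]
  have hn0 : ((n : K)) ≠ 0 := Nat.cast_ne_zero.2 (by omega)
  have key : (n : K) * (∑ c : Composition n, ((c.length : K))⁻¹ * W c.blocks)
      = (Q n)⁻¹ * ((-1 : K) ^ n * Q (n - 1)) := by
    rw [Finset.mul_sum]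
    rw [show (∑ c : Composition n, (n : K) * (((c.length : K))⁻¹ * W c.blocks))
        = ∑ c : Composition n, ((c.length : K))⁻¹ * (n : K) * W c.blocks from
      Finset.sum_congr rfl fun c _ => by ring]
    rw [sum_head n hn]
    exact main_aux n hn
  have hQ := Q_ne n
  have hsum : (∑ c : Composition n, ((c.length : K))⁻¹ * W c.blocks)
      = (n : K)⁻¹ * ((Q n)⁻¹ * ((-1 : K) ^ n * Q (n - 1))) := by
    field_simp at key ⊢
    linear_combination key
  rw [hsum, hX]
  show Q n * ((n : K)⁻¹ * ((Q n)⁻¹ * ((-1 : K) ^ n * Q (n - 1))))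
    = (-1 : K) ^ n * (1 / (n : K)) * Q (n - 1)
  field_simp

end
end Stmt3Aux

/-- Lemma 2.7 of the paper: in `ℚ(X)`,
`Σ_{p ∈ Par(n)} (-1)^{ℓ(p)} (1/ℓ(p)) [n; p]_X = (-1)^n (1/n) [n-1]_X`. -/
theorem stmt_3 (n : ℕ) (hn : 1 ≤ n) :
    ∑ c : Composition n, ((-1 : RatFunc ℚ) ^ c.length * (1 / (c.length : RatFunc ℚ)) *
        (qBracketR RatFunc.X n / (c.blocks.map (fun p => qBracketR RatFunc.X p)).prod)) =
      (-1 : RatFunc ℚ) ^ n * (1 / (n : RatFunc ℚ)) * qBracketR RatFunc.X (n - 1) := by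
  exact Stmt3Aux.main n hn
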